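/- Fix ξ > 0, Re(κ) > 0. For any compact K ⊂ V, real number D > 1, and λ ∈ 𝔥, v ∈ V, the series Σ_{y ∈ Y} exp(-(ξRe(κ)/2)(y,y) + (Re(κ)v - ξRe(λ), y) + log(D)Σ_{α∈R⁺}|(y,α)|) converges, uniformly for v in K. Consequently the generalized Bethe series E_M(v̂; λ̂) = Σ_{y∈Y} e^{(t_y λ̂, v̂)} J_{t_y}(λ̂) converges absolutely in End(M) whenever ‖J_{t_y}(λ̂)‖ ≤ D^{l(t_y)}. -/

import Mathlib

open scoped RealInnerProductSpace

/-- The lattice point y = Σᵢ mᵢ bᵢ of the full lattice Y spanned by the basis b. -/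
noncomputable def latVec {V : Type*} [NormedAddCommGroup V] [InnerProductSpace ℝ V]
    {n : ℕ} (b : Module.Basis (Fin n) ℝ V) (m : Fin n → ℤ) : V :=
  ∑ i, (m i : ℝ) • b i

lemma summable_exp_neg_sq_int (a : ℝ) (ha : 0 < a) :
    Summable fun k : ℤ => Real.exp (-a * (k : ℝ) ^ 2) := by
  have hr : Real.exp (-a) < 1 := Real.exp_lt_one_iff.mpr (by linarith)
  have hr0 : 0 ≤ Real.exp (-a) := (Real.exp_pos _).le
  have hgeo : Summable fun n : ℕ => Real.exp (-a) ^ n := summable_geometric_of_lt_one hr0 hr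
  have key : ∀ k : ℤ, Real.exp (-a * (k : ℝ) ^ 2) ≤ Real.exp (-a) ^ k.natAbs := by
    intro k
    rw [← Real.exp_nat_mul]
    apply Real.exp_le_exp.mpr
    have h2 : ((k.natAbs : ℝ)) ^ 2 = (k : ℝ) ^ 2 := by
      push_cast [Nat.cast_natAbs]
      rw [sq_abs]
    have h1 : (k.natAbs : ℝ) ≤ (k : ℝ) ^ 2 := by
      rw [← h2]
      exact_mod_cast Nat.le_self_pow two_ne_zero k.natAbs
    nlinarith
  apply Summable.of_nonneg_of_le (fun k => (Real.exp_pos _).le) key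
  apply Summable.of_nat_of_neg_add_one
  · simpa using hgeo
  · have : ∀ n : ℕ, Real.exp (-a) ^ (-1 + -(n:ℤ)).natAbs = Real.exp (-a) ^ n * Real.exp (-a) := by
      intro n
      have : (-1 + -(n:ℤ)).natAbs = n + 1 := by omega
      rw [this, pow_succ]
    simpa [this] using hgeo.mul_right (Real.exp (-a))

lemma summable_exp_neg_sq_pi (n : ℕ) (a : ℝ) (ha : 0 < a) :
    Summable fun m : Fin n → ℤ => Real.exp (-a * ∑ i, ((m i : ℝ)) ^ 2) := by
  induction n with
  | zero => exact summable_of_finite_support (Set.toFinite _)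
  | succ n ih =>
    rw [← (Fin.consEquiv (fun _ : Fin (n+1) => ℤ)).summable_iff]
    have heq : ((fun m : Fin (n+1) → ℤ => Real.exp (-a * ∑ i, ((m i : ℝ)) ^ 2))
        ∘ ⇑(Fin.consEquiv (fun _ : Fin (n+1) => ℤ)))
        = fun p : ℤ × (Fin n → ℤ) =>
          Real.exp (-a * (p.1 : ℝ) ^ 2) * Real.exp (-a * ∑ i, ((p.2 i : ℝ)) ^ 2) := by
      funext p
      simp only [Function.comp_apply, Fin.consEquiv_apply, ← Real.exp_add,
        Fin.sum_univ_succ, Fin.cons_zero, Fin.cons_succ]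
      ring_nf
    rw [heq]
    exact (summable_exp_neg_sq_int a ha).mul_of_nonneg ih
      (fun k => (Real.exp_pos _).le) (fun m => (Real.exp_pos _).le)

lemma latVec_bound {V : Type*} [NormedAddCommGroup V] [InnerProductSpace ℝ V]
    {n : ℕ} (b : Module.Basis (Fin n) ℝ V) :
    ∃ C₀ : ℝ, 0 ≤ C₀ ∧ ∀ m : Fin n → ℤ,
      ∑ i, ((m i : ℝ)) ^ 2 ≤ (C₀ ^ 2 + 1) * ‖latVec b m‖ ^ 2 := by
  haveI : FiniteDimensional ℝ V := Module.Finite.of_basis b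
  set L : V →ₗ[ℝ] EuclideanSpace ℝ (Fin n) :=
    ((EuclideanSpace.equiv (Fin n) ℝ).symm.toLinearMap.comp b.equivFun.toLinearMap) with hL
  set Lc := LinearMap.toContinuousLinearMap L with hLc
  refine ⟨‖Lc‖, norm_nonneg _, fun m => ?_⟩
  have hcoord : ∀ i, L (latVec b m) i = (m i : ℝ) := by
    intro i
    have : b.equivFun (latVec b m) = fun i => (m i : ℝ) := by
      rw [show latVec b m = b.equivFun.symm (fun i => (m i : ℝ)) from ?_,
        LinearEquiv.apply_symm_apply]
      rw [b.equivFun_symm_apply]; rfl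
    simp [hL, this]
  have hsum : ‖L (latVec b m)‖ ^ 2 = ∑ i, ((m i : ℝ)) ^ 2 := by
    rw [EuclideanSpace.norm_eq, Real.sq_sqrt (by positivity)]
    exact Finset.sum_congr rfl fun i _ => by rw [hcoord i, Real.norm_eq_abs, sq_abs]
  rw [← hsum]
  have h2 : ‖L (latVec b m)‖ ≤ ‖Lc‖ * ‖latVec b m‖ := Lc.le_opNorm (latVec b m)
  nlinarith [norm_nonneg (L (latVec b m)), norm_nonneg (latVec b m), norm_nonneg Lc]

lemma summable_key {V : Type*} [NormedAddCommGroup V] [InnerProductSpace ℝ V]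
    {n : ℕ} (b : Module.Basis (Fin n) ℝ V) (a C : ℝ) (ha : 0 < a) :
    Summable fun m : Fin n → ℤ =>
      Real.exp (-a * ⟪latVec b m, latVec b m⟫ + C * ‖latVec b m‖) := by
  obtain ⟨C₀, hC₀0, hlow⟩ := latVec_bound b
  set a' := a / (2 * (C₀ ^ 2 + 1)) with ha'
  have hC₀1 : 0 < C₀ ^ 2 + 1 := by positivity
  have ha'0 : 0 < a' := by positivity
  apply Summable.of_nonneg_of_le (fun m => (Real.exp_pos _).le)
    (f := fun m : Fin n → ℤ => Real.exp (C ^ 2 / (2 * a)) * Real.exp (-a' * ∑ i, ((m i : ℝ)) ^ 2))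
  · intro m
    rw [← Real.exp_add]
    apply Real.exp_le_exp.mpr
    have hinner : ⟪latVec b m, latVec b m⟫ = ‖latVec b m‖ ^ 2 := real_inner_self_eq_norm_sq _
    have ht0 : (0:ℝ) ≤ ‖latVec b m‖ := norm_nonneg _
    set t := ‖latVec b m‖ with ht
    have key1 : -a * t ^ 2 + C * t ≤ C ^ 2 / (2 * a) - (a / 2) * t ^ 2 := by
      rw [div_sub' (by positivity), le_div_iff₀ (by positivity)]
      nlinarith [sq_nonneg (a * t - C), ha.le]
    have key2 : a' * ∑ i, ((m i : ℝ)) ^ 2 ≤ (a / 2) * t ^ 2 := by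
      have hl := hlow m
      rw [← ht] at hl
      have hSnn : (0:ℝ) ≤ ∑ i, ((m i : ℝ)) ^ 2 := by positivity
      rw [ha', div_mul_eq_mul_div, div_le_iff₀ (by positivity)]
      nlinarith [ha.le]
    rw [hinner]
    linarith
  · exact (summable_exp_neg_sq_pi n a' ha'0).mul_left _

/-- for ξ > 0 and Re(κ) > 0, the series
Σ_{y∈Y} exp(-(ξRe(κ)/2)(y,y) + (Re(κ)v - ξRe(λ), y) + log(D)·Σ_{α∈R⁺}|(y,α)|)
converges, uniformly for v in any compact K ⊆ V; consequently the generalized Bethe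
series Σ_{y∈Y} e^{(t_yλ̂,v̂)} J_{t_y}(λ̂) converges absolutely in End(M) whenever
‖J_{t_y}(λ̂)‖ ≤ D^{l(t_y)}, where l(t_y) = Σ_{α∈R⁺}|(y,α)| and
e^{(t_yλ̂,v̂)} = exp(uκ + ξη + (λ,v) + κ(v,y) - ξ(λ,y) - (ξκ/2)(y,y))
for v̂ = v + uc + ξd and λ̂ = λ + ηc + κd. -/
theorem stmt15 {V : Type*} [NormedAddCommGroup V] [InnerProductSpace ℝ V]
    {n : ℕ} (b : Module.Basis (Fin n) ℝ V) (Rplus : Finset V)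
    (ξ : ℝ) (hξ : 0 < ξ) (κ : ℂ) (hκ : 0 < κ.re)
    (lamre : V) (D : ℝ) (hD : 1 < D)
    (K : Set V) (hK : IsCompact K)
    {M : Type*} [NormedAddCommGroup M] [NormedSpace ℂ M]
    (J : (Fin n → ℤ) → M →L[ℂ] M)
    (hJ : ∀ m : Fin n → ℤ,
      ‖J m‖ ≤ Real.rpow D (∑ α ∈ Rplus, |⟪latVec b m, α⟫|))
    (Λ : V →ₗ[ℝ] ℂ) (hΛ : ∀ z : V, (Λ z).re = ⟪lamre, z⟫) :
    (∀ v : V, Summable (fun m : Fin n → ℤ =>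
      Real.exp (-(ξ * κ.re / 2) * ⟪latVec b m, latVec b m⟫
        + ⟪κ.re • v - ξ • lamre, latVec b m⟫
        + Real.log D * ∑ α ∈ Rplus, |⟪latVec b m, α⟫|))) ∧
    (TendstoUniformlyOn
      (fun (s : Finset (Fin n → ℤ)) (v : V) => ∑ m ∈ s,
        Real.exp (-(ξ * κ.re / 2) * ⟪latVec b m, latVec b m⟫
          + ⟪κ.re • v - ξ • lamre, latVec b m⟫
          + Real.log D * ∑ α ∈ Rplus, |⟪latVec b m, α⟫|))
      (fun v : V => ∑' m : Fin n → ℤ,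
        Real.exp (-(ξ * κ.re / 2) * ⟪latVec b m, latVec b m⟫
          + ⟪κ.re • v - ξ • lamre, latVec b m⟫
          + Real.log D * ∑ α ∈ Rplus, |⟪latVec b m, α⟫|))
      Filter.atTop K) ∧
    (∀ (v : V) (u : ℝ) (η : ℂ), Summable (fun m : Fin n → ℤ =>
      ‖Complex.exp ((u : ℂ) * κ + (ξ : ℂ) * η + Λ v
          + κ * ((⟪v, latVec b m⟫ : ℝ) : ℂ) - (ξ : ℂ) * Λ (latVec b m)
          - ((ξ : ℂ) * κ / 2) * ((⟪latVec b m, latVec b m⟫ : ℝ) : ℂ)) • J m‖)) := by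
  set a : ℝ := ξ * κ.re / 2 with ha_def
  have ha : 0 < a := by positivity
  set Lg : ℝ := Real.log D with hLg
  have hLg0 : 0 < Lg := Real.log_pos hD
  set A : ℝ := ∑ α ∈ Rplus, ‖α‖ with hA
  have hA0 : 0 ≤ A := Finset.sum_nonneg fun α _ => norm_nonneg _
  -- bound on the root sum
  have hS : ∀ m : Fin n → ℤ, (∑ α ∈ Rplus, |⟪latVec b m, α⟫|) ≤ A * ‖latVec b m‖ := by
    intro m
    rw [hA, Finset.sum_mul]
    refine Finset.sum_le_sum fun α _ => ?_
    rw [mul_comm]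
    exact abs_real_inner_le_norm _ _
  have hSnn : ∀ m : Fin n → ℤ, (0:ℝ) ≤ ∑ α ∈ Rplus, |⟪latVec b m, α⟫| :=
    fun m => Finset.sum_nonneg fun α _ => abs_nonneg _
  -- key pointwise bound
  have hbound : ∀ (w : V) (m : Fin n → ℤ),
      -a * ⟪latVec b m, latVec b m⟫ + ⟪w, latVec b m⟫
        + Lg * ∑ α ∈ Rplus, |⟪latVec b m, α⟫|
      ≤ -a * ⟪latVec b m, latVec b m⟫ + (‖w‖ + Lg * A) * ‖latVec b m‖ := by
    intro w m
    have h1 : ⟪w, latVec b m⟫ ≤ ‖w‖ * ‖latVec b m‖ := real_inner_le_norm _ _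
    have h2 : Lg * ∑ α ∈ Rplus, |⟪latVec b m, α⟫| ≤ Lg * (A * ‖latVec b m‖) :=
      mul_le_mul_of_nonneg_left (hS m) hLg0.le
    nlinarith
  have part1 : ∀ v : V, Summable (fun m : Fin n → ℤ =>
      Real.exp (-(ξ * κ.re / 2) * ⟪latVec b m, latVec b m⟫
        + ⟪κ.re • v - ξ • lamre, latVec b m⟫
        + Real.log D * ∑ α ∈ Rplus, |⟪latVec b m, α⟫|)) := by
    intro v
    apply Summable.of_nonneg_of_le (fun m => (Real.exp_pos _).le)
      (f := fun m : Fin n → ℤ => Real.exp (-a * ⟪latVec b m, latVec b m⟫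
        + (‖κ.re • v - ξ • lamre‖ + Lg * A) * ‖latVec b m‖))
    · intro m
      exact Real.exp_le_exp.mpr (by have h := hbound (κ.re • v - ξ • lamre) m; simp only [ha_def, hLg] at h ⊢; linarith)
    · exact summable_key b a _ ha
  refine ⟨part1, ?_, ?_⟩
  · -- uniform convergence on K
    obtain ⟨R, hR⟩ := hK.isBounded.exists_norm_le
    set CK : ℝ := κ.re * R + ξ * ‖lamre‖ + Lg * A with hCK
    apply tendstoUniformlyOn_tsum
      (u := fun m : Fin n → ℤ => Real.exp (-a * ⟪latVec b m, latVec b m⟫ + CK * ‖latVec b m‖))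
      (summable_key b a CK ha)
    intro m v hv
    rw [Real.norm_eq_abs, abs_of_pos (Real.exp_pos _)]
    apply Real.exp_le_exp.mpr
    have hw : ‖κ.re • v - ξ • lamre‖ ≤ κ.re * R + ξ * ‖lamre‖ := by
      refine (norm_sub_le _ _).trans ?_
      rw [norm_smul, norm_smul, Real.norm_eq_abs, Real.norm_eq_abs,
        abs_of_pos hκ, abs_of_pos hξ]
      have := hR v hv
      nlinarith
    have h1 := hbound (κ.re • v - ξ • lamre) m
    have h2 : (‖κ.re • v - ξ • lamre‖ + Lg * A) * ‖latVec b m‖ ≤ CK * ‖latVec b m‖ := by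
      apply mul_le_mul_of_nonneg_right _ (norm_nonneg _)
      rw [hCK]; linarith
    calc -(ξ * κ.re / 2) * ⟪latVec b m, latVec b m⟫ + ⟪κ.re • v - ξ • lamre, latVec b m⟫
          + Real.log D * ∑ α ∈ Rplus, |⟪latVec b m, α⟫|
        ≤ -a * ⟪latVec b m, latVec b m⟫
          + (‖κ.re • v - ξ • lamre‖ + Lg * A) * ‖latVec b m‖ := by
          simp only [ha_def, hLg] at h1 ⊢; linarith
      _ ≤ -a * ⟪latVec b m, latVec b m⟫ + CK * ‖latVec b m‖ := by linarith
  · -- absolute convergence of the Bethe series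
    intro v u η
    set c : ℝ := u * κ.re + ξ * η.re + ⟪lamre, v⟫ with hc
    apply Summable.of_nonneg_of_le (fun m => norm_nonneg _)
      (f := fun m : Fin n → ℤ => Real.exp c *
        Real.exp (-(ξ * κ.re / 2) * ⟪latVec b m, latVec b m⟫
          + ⟪κ.re • v - ξ • lamre, latVec b m⟫
          + Real.log D * ∑ α ∈ Rplus, |⟪latVec b m, α⟫|))
    · intro m
      set z : ℂ := (u : ℂ) * κ + (ξ : ℂ) * η + Λ v
          + κ * ((⟪v, latVec b m⟫ : ℝ) : ℂ) - (ξ : ℂ) * Λ (latVec b m)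
          - ((ξ : ℂ) * κ / 2) * ((⟪latVec b m, latVec b m⟫ : ℝ) : ℂ) with hz
      have hzre : z.re = c + (-(ξ * κ.re / 2) * ⟪latVec b m, latVec b m⟫
          + ⟪κ.re • v - ξ • lamre, latVec b m⟫) := by
        rw [hz, hc]
        have hdiv : ((ξ : ℂ) * κ / 2) = (((ξ/2 : ℝ)) : ℂ) * κ := by push_cast; ring
        rw [hdiv]
        simp only [Complex.add_re, Complex.sub_re, Complex.mul_re, Complex.ofReal_re,
          Complex.ofReal_im, hΛ, inner_sub_left, real_inner_smul_left]
        ring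
      rw [norm_smul (Complex.exp z) (J m), Complex.norm_exp]
      have hJm : ‖J m‖ ≤ Real.exp (Real.log D * ∑ α ∈ Rplus, |⟪latVec b m, α⟫|) := by
        rw [← Real.rpow_def_of_pos (by linarith : (0:ℝ) < D)]
        exact hJ m
      calc Real.exp z.re * ‖J m‖
          ≤ Real.exp z.re * Real.exp (Real.log D * ∑ α ∈ Rplus, |⟪latVec b m, α⟫|) :=
            mul_le_mul_of_nonneg_left hJm (Real.exp_pos _).le
        _ = _ := by
            rw [← Real.exp_add, ← Real.exp_add, hzre]
            congr 1
            ring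
    · exact (part1 v).mul_left _
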